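/- Every superfiguration admits a V-shaped frame; that is, if S is a linear space in which every point lies on at least 3 lines of size at least 3 and every line of size at least 3 contains at least 3 points, then there exist 5 distinct points p1, p2, p3, p4, p5 of S such that p1, p2, p3 are collinear, p1, p4, p5 are collinear, and no line of S contains 3 of the points p2, p3, p4, p5. -/
import Mathlib


/-- A set has at least three (distinct) elements. -/
def HasThree {α : Type*} (s : Set α) : Prop :=
  ∃ a b c, a ∈ s ∧ b ∈ s ∧ c ∈ s ∧ a ≠ b ∧ a ≠ c ∧ b ≠ c

/-- A linear space: a nonempty set of points together with a set of lines such that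
any two distinct points lie on exactly one line and every line has at least two points. -/
structure LinearSpace (P : Type*) where
  nonempty : Nonempty P
  lines : Set (Set P)
  unique_line : ∀ p q : P, p ≠ q → ∃! ℓ, ℓ ∈ lines ∧ p ∈ ℓ ∧ q ∈ ℓ
  two_points : ∀ ℓ ∈ lines, ∃ a b, a ∈ ℓ ∧ b ∈ ℓ ∧ a ≠ b

/-- From a three-element set we can pick two distinct elements avoiding any given point. -/
lemma two_other {α : Type*} {s : Set α} (h : HasThree s) (p : α) :
    ∃ x y, x ∈ s ∧ y ∈ s ∧ x ≠ y ∧ x ≠ p ∧ y ≠ p := by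
  obtain ⟨a, b, c, ha, hb, hc, hab, hac, hbc⟩ := h
  by_cases hap : a = p
  · exact ⟨b, c, hb, hc, hbc, fun h => hab (h.trans hap.symm).symm,
      fun h => hac (h.trans hap.symm).symm⟩
  · by_cases hbp : b = p
    · exact ⟨a, c, ha, hc, hac, hap, fun h => hbc (h.trans hbp.symm).symm⟩
    · exact ⟨a, b, ha, hb, hab, hap, hbp⟩

/-- Two distinct lines of a linear space meet in at most one point. -/
lemma line_eq_of_two {P : Type*} (S : LinearSpace P) {ℓ m : Set P} {x y : P}
    (hℓ : ℓ ∈ S.lines) (hm : m ∈ S.lines) (hxy : x ≠ y)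
    (hxℓ : x ∈ ℓ) (hyℓ : y ∈ ℓ) (hxm : x ∈ m) (hym : y ∈ m) : ℓ = m := by
  obtain ⟨n, -, hu⟩ := S.unique_line x y hxy
  exact (hu ℓ ⟨hℓ, hxℓ, hyℓ⟩).trans (hu m ⟨hm, hxm, hym⟩).symm

/-- Every superfiguration admits a V-shaped frame. -/
theorem superfiguration_has_V_frame {P : Type*} (S : LinearSpace P)
    (hpt : ∀ p : P, HasThree {ℓ | ℓ ∈ S.lines ∧ p ∈ ℓ ∧ HasThree ℓ})
    (hln : ∀ ℓ ∈ S.lines, HasThree ℓ → HasThree ℓ) :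
    ∃ p1 p2 p3 p4 p5 : P,
      Function.Injective (![p1, p2, p3, p4, p5] : Fin 5 → P) ∧
      (∃ ℓ ∈ S.lines, p1 ∈ ℓ ∧ p2 ∈ ℓ ∧ p3 ∈ ℓ) ∧
      (∃ ℓ ∈ S.lines, p1 ∈ ℓ ∧ p4 ∈ ℓ ∧ p5 ∈ ℓ) ∧
      ∀ ℓ ∈ S.lines, ∀ a b c : P,
        a ∈ ({p2, p3, p4, p5} : Set P) → b ∈ ({p2, p3, p4, p5} : Set P) →
        c ∈ ({p2, p3, p4, p5} : Set P) → a ≠ b → a ≠ c → b ≠ c →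
        ¬(a ∈ ℓ ∧ b ∈ ℓ ∧ c ∈ ℓ) := by
  obtain ⟨p1⟩ := S.nonempty
  obtain ⟨ℓ1, ℓ2, ℓ3, hℓ1, hℓ2, -, h12, -, -⟩ := hpt p1
  obtain ⟨hℓ1L, hp1ℓ1, hℓ1three⟩ := hℓ1
  obtain ⟨hℓ2L, hp1ℓ2, hℓ2three⟩ := hℓ2
  obtain ⟨p2, p3, hp2, hp3, h23, h21, h31⟩ := two_other hℓ1three p1
  obtain ⟨p4, p5, hp4, hp5, h45, h41, h51⟩ := two_other hℓ2three p1
  -- a point on both ℓ1 and ℓ2 must be p1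
  have key : ∀ x : P, x ∈ ℓ1 → x ∈ ℓ2 → x = p1 := by
    intro x hx1 hx2
    by_contra hx
    exact h12 (line_eq_of_two S hℓ1L hℓ2L hx hx1 hp1ℓ1 hx2 hp1ℓ2)
  have h24 : p2 ≠ p4 := fun h => h21 (key p2 hp2 (h ▸ hp4))
  have h25 : p2 ≠ p5 := fun h => h21 (key p2 hp2 (h ▸ hp5))
  have h34 : p3 ≠ p4 := fun h => h31 (key p3 hp3 (h ▸ hp4))
  have h35 : p3 ≠ p5 := fun h => h31 (key p3 hp3 (h ▸ hp5))
  have hn4 : p4 ∉ ℓ1 := fun h => h41 (key p4 h hp4)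
  have hn5 : p5 ∉ ℓ1 := fun h => h51 (key p5 h hp5)
  have hn2 : p2 ∉ ℓ2 := fun h => h21 (key p2 hp2 h)
  have hn3 : p3 ∉ ℓ2 := fun h => h31 (key p3 hp3 h)
  refine ⟨p1, p2, p3, p4, p5, ?_, ⟨ℓ1, hℓ1L, hp1ℓ1, hp2, hp3⟩,
    ⟨ℓ2, hℓ2L, hp1ℓ2, hp4, hp5⟩, ?_⟩
  · intro i j h
    have h12' := h21.symm
    have h13' := h31.symm
    have h14' := h41.symm
    have h15' := h51.symm
    fin_cases i <;> fin_cases j <;> simp_all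
  · intro ℓ hℓ a b c ha hb hc hab hac hbc ⟨haℓ, hbℓ, hcℓ⟩
    simp only [Set.mem_insert_iff, Set.mem_singleton_iff] at ha hb hc
    -- the triple contains both of {p2,p3} plus one of {p4,p5}, or both of {p4,p5}
    -- plus one of {p2,p3}
    have main : (p2 ∈ ℓ ∧ p3 ∈ ℓ ∧ (p4 ∈ ℓ ∨ p5 ∈ ℓ)) ∨
        (p4 ∈ ℓ ∧ p5 ∈ ℓ ∧ (p2 ∈ ℓ ∨ p3 ∈ ℓ)) := by
      rcases ha with rfl | rfl | rfl | rfl <;>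
        rcases hb with rfl | rfl | rfl | rfl <;>
        rcases hc with rfl | rfl | rfl | rfl <;>
        first
          | exact absurd rfl hab
          | exact absurd rfl hac
          | exact absurd rfl hbc
          | exact Or.inl ⟨haℓ, hbℓ, Or.inl hcℓ⟩
          | exact Or.inl ⟨haℓ, hbℓ, Or.inr hcℓ⟩
          | exact Or.inr ⟨haℓ, hbℓ, Or.inl hcℓ⟩
          | exact Or.inr ⟨haℓ, hbℓ, Or.inr hcℓ⟩
          | exact Or.inl ⟨haℓ, hcℓ, Or.inl hbℓ⟩
          | exact Or.inl ⟨haℓ, hcℓ, Or.inr hbℓ⟩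
          | exact Or.inr ⟨haℓ, hcℓ, Or.inl hbℓ⟩
          | exact Or.inr ⟨haℓ, hcℓ, Or.inr hbℓ⟩
          | exact Or.inl ⟨hbℓ, haℓ, Or.inl hcℓ⟩
          | exact Or.inl ⟨hbℓ, haℓ, Or.inr hcℓ⟩
          | exact Or.inr ⟨hbℓ, haℓ, Or.inl hcℓ⟩
          | exact Or.inr ⟨hbℓ, haℓ, Or.inr hcℓ⟩
          | exact Or.inl ⟨hbℓ, hcℓ, Or.inl haℓ⟩
          | exact Or.inl ⟨hbℓ, hcℓ, Or.inr haℓ⟩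
          | exact Or.inr ⟨hbℓ, hcℓ, Or.inl haℓ⟩
          | exact Or.inr ⟨hbℓ, hcℓ, Or.inr haℓ⟩
          | exact Or.inl ⟨hcℓ, haℓ, Or.inl hbℓ⟩
          | exact Or.inl ⟨hcℓ, haℓ, Or.inr hbℓ⟩
          | exact Or.inr ⟨hcℓ, haℓ, Or.inl hbℓ⟩
          | exact Or.inr ⟨hcℓ, haℓ, Or.inr hbℓ⟩
          | exact Or.inl ⟨hcℓ, hbℓ, Or.inl haℓ⟩
          | exact Or.inl ⟨hcℓ, hbℓ, Or.inr haℓ⟩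
          | exact Or.inr ⟨hcℓ, hbℓ, Or.inl haℓ⟩
          | exact Or.inr ⟨hcℓ, hbℓ, Or.inr haℓ⟩
    rcases main with ⟨h2, h3, h45'⟩ | ⟨h4, h5, h23'⟩
    · have heq : ℓ = ℓ1 := line_eq_of_two S hℓ hℓ1L h23 h2 h3 hp2 hp3
      subst heq
      rcases h45' with h | h
      · exact hn4 h
      · exact hn5 h
    · have heq : ℓ = ℓ2 := line_eq_of_two S hℓ hℓ2L h45 h4 h5 hp4 hp5
      subst heq
      rcases h23' with h | h
      · exact hn2 h
      · exact hn3 h
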